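/- arXiv:1908.01736 — 3 statements merged into one kernel-verified Lean document; each statement's English description precedes it below -/
import Mathlib

section
/- Let V be a real vector space and let a¹,…,aⁿ,b¹,…,bⁿ be linearly independent elements of V* (with 2n ≤ dim V). Suppose u = (uⁱⱼ) and v = (vⁱⱼ) are symmetric n×n matrices whose entries are one-forms lying in the span of the aᵏ and bᵏ, written uⁱⱼ = Σₖ uⁱ_{ajk} aᵏ + Σₖ uⁱ_{bjk} bᵏ and similarly for v. If the torsion-free conditions Σⱼ uⁱⱼ ∧ aʲ + Σⱼ vⁱⱼ ∧ bʲ = 0 and Σⱼ vⁱⱼ ∧ aʲ - Σⱼ uⁱⱼ ∧ bʲ = 0 hold, then uⁱ_{ajk} = -vⁱ_{bjk} and uⁱ_{bjk} = vⁱ_{ajk} for all i,j,k. -/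
open ExteriorAlgebra

/-- A finite linearly independent family of functionals admits a dual family of vectors. -/
lemma exists_dual_family {ι : Type*} [Fintype ι] [DecidableEq ι]
    {V : Type*} [AddCommGroup V] [Module ℝ V]
    (c : ι → Module.Dual ℝ V) (h : LinearIndependent ℝ c) :
    ∃ e : ι → V, ∀ i j, c i (e j) = if i = j then 1 else 0 := by
  have hsurj : Function.Surjective (LinearMap.pi c) := by
    rw [← LinearMap.range_eq_top]
    by_contra hne
    obtain ⟨φ, hφ0, hφ⟩ := Submodule.exists_dual_map_eq_bot_of_lt_top
      (Ne.lt_top hne) inferInstance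
    set d : ι → ℝ := fun i => φ (Pi.single i 1) with hd
    have hφw : ∀ w : ι → ℝ, φ w = ∑ i, w i * d i := by
      intro w
      conv_lhs => rw [pi_eq_sum_univ w]
      rw [map_sum]
      refine Finset.sum_congr rfl fun i _ => ?_
      rw [map_smul, smul_eq_mul]
      congr 2
      ext j
      simp [Pi.single_apply, eq_comm]
    have hvan : ∀ x : V, φ (LinearMap.pi c x) = 0 := by
      intro x
      have hm : φ (LinearMap.pi c x) ∈ (LinearMap.range (LinearMap.pi c)).map φ :=
        ⟨_, ⟨x, rfl⟩, rfl⟩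
      rw [hφ] at hm
      simpa using hm
    have hc : ∀ i, d i = 0 := by
      refine Fintype.linearIndependent_iff.mp h d ?_
      ext x
      have := hvan x
      rw [hφw] at this
      simpa [LinearMap.pi_apply, mul_comm] using this
    apply hφ0
    refine LinearMap.ext fun w => ?_
    rw [hφw]
    simp [hc]
  choose e he using fun j => hsurj (Pi.single j 1)
  refine ⟨e, fun i j => ?_⟩
  have := congrFun (he j) i
  simp only [LinearMap.pi_apply] at this
  rw [this, Pi.single_apply]

/-- Evaluation of the degree-2 part of the exterior algebra of the dual space
on a pair of vectors. -/
noncomputable def evW {V : Type*} [AddCommGroup V] [Module ℝ V] (x y : V) :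
    ExteriorAlgebra ℝ (Module.Dual ℝ V) →ₗ[ℝ] ℝ :=
  ExteriorAlgebra.liftAlternating fun i =>
    match i with
    | 2 => (Matrix.detRowAlternating (R := ℝ) (n := Fin 2)).compLinearMap
        (LinearMap.pi fun j : Fin 2 => Module.Dual.eval ℝ V (![x, y] j))
    | _ => 0

lemma evW_ι_mul {V : Type*} [AddCommGroup V] [Module ℝ V] (x y : V)
    (f g : Module.Dual ℝ V) :
    evW x y (ι ℝ f * ι ℝ g) = f x * g y - f y * g x := by
  rw [evW, ExteriorAlgebra.liftAlternating_ι_mul, ExteriorAlgebra.liftAlternating_ι]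
  show Matrix.detRowAlternating
      ((LinearMap.pi fun j : Fin 2 => Module.Dual.eval ℝ V (![x, y] j)) ∘ ![f, g]) =
    f x * g y - f y * g x
  have hdet : ∀ r : Fin 2 → (Fin 2 → ℝ),
      Matrix.detRowAlternating r = Matrix.det (Matrix.of r) := fun _ => rfl
  rw [hdet, Matrix.det_fin_two]
  simp [LinearMap.pi_apply, Module.Dual.eval_apply, Matrix.of_apply]

set_option maxHeartbeats 1000000 in
set_option synthInstance.maxHeartbeats 400000 in
open ExteriorAlgebra in
/-- Torsion-free conditions for symmetric matrices of one-forms `u`, `v` in the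
span of linearly independent one-forms `a¹,…,aⁿ,b¹,…,bⁿ` force the coefficient
relations `uⁱ_{ajk} = -vⁱ_{bjk}` and `uⁱ_{bjk} = vⁱ_{ajk}`. -/
theorem stmt_4 (n : ℕ) (V : Type*) [AddCommGroup V] [Module ℝ V]
    (a b : Fin n → Module.Dual ℝ V)
    (hdim : (2 * n : Cardinal) ≤ Module.rank ℝ V)
    (hli : LinearIndependent ℝ (Sum.elim a b))
    (ua ub va vb : Fin n → Fin n → Fin n → ℝ)
    (u v : Fin n → Fin n → Module.Dual ℝ V)
    (hu : ∀ i j, u i j = ∑ k, ua i j k • a k + ∑ k, ub i j k • b k)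
    (hv : ∀ i j, v i j = ∑ k, va i j k • a k + ∑ k, vb i j k • b k)
    (husym : ∀ i j, u i j = u j i) (hvsym : ∀ i j, v i j = v j i)
    (htf1 : ∀ i, (∑ j, ι ℝ (u i j) * ι ℝ (a j)) +
        (∑ j, ι ℝ (v i j) * ι ℝ (b j)) = 0)
    (htf2 : ∀ i, (∑ j, ι ℝ (v i j) * ι ℝ (a j)) -
        (∑ j, ι ℝ (u i j) * ι ℝ (b j)) = 0) :
    ∀ i j k, ua i j k = -vb i j k ∧ ub i j k = va i j k := by
  obtain ⟨e, he⟩ := exists_dual_family (Sum.elim a b) hli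
  have hAA : ∀ j k, a j (e (Sum.inl k)) = if j = k then 1 else 0 := by
    intro j k; simpa using he (Sum.inl j) (Sum.inl k)
  have hAB : ∀ j k, a j (e (Sum.inr k)) = 0 := by
    intro j k; simpa using he (Sum.inl j) (Sum.inr k)
  have hBA : ∀ j k, b j (e (Sum.inl k)) = 0 := by
    intro j k; simpa using he (Sum.inr j) (Sum.inl k)
  have hBB : ∀ j k, b j (e (Sum.inr k)) = if j = k then 1 else 0 := by
    intro j k; simpa using he (Sum.inr j) (Sum.inr k)
  have huA : ∀ i j k, u i j (e (Sum.inl k)) = ua i j k := by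
    intro i j k
    rw [hu]
    simp [LinearMap.add_apply, LinearMap.sum_apply, LinearMap.smul_apply,
      hAA, hBA, mul_ite, Finset.sum_ite_eq']
  have huB : ∀ i j k, u i j (e (Sum.inr k)) = ub i j k := by
    intro i j k
    rw [hu]
    simp [LinearMap.add_apply, LinearMap.sum_apply, LinearMap.smul_apply,
      hAB, hBB, mul_ite, Finset.sum_ite_eq']
  have hvA : ∀ i j k, v i j (e (Sum.inl k)) = va i j k := by
    intro i j k
    rw [hv]
    simp [LinearMap.add_apply, LinearMap.sum_apply, LinearMap.smul_apply,
      hAA, hBA, mul_ite, Finset.sum_ite_eq']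
  have hvB : ∀ i j k, v i j (e (Sum.inr k)) = vb i j k := by
    intro i j k
    rw [hv]
    simp [LinearMap.add_apply, LinearMap.sum_apply, LinearMap.smul_apply,
      hAB, hBB, mul_ite, Finset.sum_ite_eq']
  have key1 : ∀ i (x y : V),
      (∑ j, (u i j x * a j y - u i j y * a j x)) +
      (∑ j, (v i j x * b j y - v i j y * b j x)) = 0 := by
    intro i x y
    have h0 := congrArg (evW x y) (htf1 i)
    simpa [map_add, map_sum, evW_ι_mul] using h0
  have key2 : ∀ i (x y : V),
      (∑ j, (v i j x * a j y - v i j y * a j x)) -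
      (∑ j, (u i j x * b j y - u i j y * b j x)) = 0 := by
    intro i x y
    have h0 := congrArg (evW x y) (htf2 i)
    simpa [map_sub, map_sum, evW_ι_mul] using h0
  -- (*) va i q p = ub i p q
  have hstar : ∀ i p q, va i q p = ub i p q := by
    intro i p q
    have h := key1 i (e (Sum.inl p)) (e (Sum.inr q))
    simp only [huA, huB, hvA, hvB, hAA, hAB, hBA, hBB, mul_ite, mul_one, mul_zero,
      zero_sub, sub_zero, Finset.sum_ite_eq', Finset.mem_univ, if_true,
      Finset.sum_neg_distrib] at h
    linarith
  -- (**) vb symmetric in last two indices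
  have hvbsym : ∀ i p q, vb i q p = vb i p q := by
    intro i p q
    have h := key1 i (e (Sum.inr p)) (e (Sum.inr q))
    simp only [huA, huB, hvA, hvB, hAA, hAB, hBA, hBB, mul_ite, mul_one, mul_zero,
      zero_sub, sub_zero, Finset.sum_ite_eq', Finset.mem_univ, if_true,
      Finset.sum_neg_distrib, Finset.sum_sub_distrib, Finset.sum_const_zero] at h
    linarith
  -- (***) ua i q p = -vb i p q
  have hstar2 : ∀ i p q, ua i q p = -vb i p q := by
    intro i p q
    have h := key2 i (e (Sum.inl p)) (e (Sum.inr q))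
    simp only [huA, huB, hvA, hvB, hAA, hAB, hBA, hBB, mul_ite, mul_one, mul_zero,
      zero_sub, sub_zero, Finset.sum_ite_eq', Finset.mem_univ, if_true,
      Finset.sum_neg_distrib] at h
    linarith
  -- (****) ub symmetric in last two indices
  have hubsym : ∀ i p q, ub i q p = ub i p q := by
    intro i p q
    have h := key2 i (e (Sum.inr p)) (e (Sum.inr q))
    simp only [huA, huB, hvA, hvB, hAA, hAB, hBA, hBB, mul_ite, mul_one, mul_zero,
      zero_sub, sub_zero, Finset.sum_ite_eq', Finset.mem_univ, if_true,
      Finset.sum_neg_distrib, Finset.sum_sub_distrib, Finset.sum_const_zero] at h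
    linarith
  intro i j k
  refine ⟨?_, ?_⟩
  · rw [hstar2 i k j, hvbsym i j k]
  · rw [hstar i k j]
    exact hubsym i k j
end

section
/- With the hypotheses of the torsion-free condition as above (u, v symmetric n×n matrices of one-forms in the span of a¹,…,aⁿ,b¹,…,bⁿ satisfying Σⱼ uⁱⱼ∧aʲ + Σⱼ vⁱⱼ∧bʲ = 0 = Σⱼ vⁱⱼ∧aʲ - Σⱼ uⁱⱼ∧bʲ), the coefficient arrays vⁱ_{ajk} and vⁱ_{bjk} (defined by vⁱⱼ = Σₖ vⁱ_{ajk}aᵏ + Σₖ vⁱ_{bjk}bᵏ) are totally symmetric in all three indices i, j, k. -/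
set_option synthInstance.maxHeartbeats 1000000
set_option maxHeartbeats 1000000

open Module in
lemma exists_dualFamily' {ι E : Type*} [Finite ι] [DecidableEq ι] [AddCommGroup E] [Module ℝ E]
    {f : ι → Module.Dual ℝ E} (hf : LinearIndependent ℝ f) :
    ∃ e : ι → E, ∀ s t, f s (e t) = if s = t then 1 else 0 := by
  have key : ∀ t : ι, ∃ x : E, f t x = 1 ∧ ∀ s, s ≠ t → f s x = 0 := by
    intro t
    have hnot : f t ∉ Submodule.span ℝ (Set.range (({t}ᶜ : Set ι).restrict f)) := by
      rw [show Set.range (({t}ᶜ : Set ι).restrict f) = f '' {t}ᶜ from Set.range_domRestrict f _]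
      exact hf.notMem_span_image (by simp)
    have hle : ¬ (⨅ s : ({t}ᶜ : Set ι), LinearMap.ker (f s) ≤ LinearMap.ker (f t)) := by
      intro hle
      exact hnot (mem_span_of_iInf_ker_le_ker hle)
    rw [SetLike.not_le_iff_exists] at hle
    obtain ⟨x, hx1, hx2⟩ := hle
    have hftx : f t x ≠ 0 := fun h => hx2 (by simpa [LinearMap.mem_ker] using h)
    refine ⟨(f t x)⁻¹ • x, by simp [inv_mul_cancel₀ hftx], fun s hs => ?_⟩
    have : x ∈ LinearMap.ker (f s) :=
      Submodule.mem_iInf (fun s : ({t}ᶜ : Set ι) => LinearMap.ker (f s)) |>.mp hx1 ⟨s, by simp [hs]⟩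
    simp [LinearMap.mem_ker.mp this]
  choose e he1 he2 using key
  refine ⟨e, fun s t => ?_⟩
  by_cases h : s = t
  · simp [h, he1]
  · simp [h, he2 t s h]

open ExteriorAlgebra in
lemma contract2' {V : Type*} [AddCommGroup V] [Module ℝ V]
    (d d' : Module.Dual ℝ (Module.Dual ℝ V)) (x y : Module.Dual ℝ V) :
    CliffordAlgebra.contractLeft (Q := (0 : QuadraticForm ℝ (Module.Dual ℝ V))) d'
      (CliffordAlgebra.contractLeft (Q := 0) d
        ((ι ℝ x * ι ℝ y : ExteriorAlgebra ℝ (Module.Dual ℝ V)))) =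
      algebraMap ℝ _ (d x * d' y - d y * d' x) := by
  rw [CliffordAlgebra.contractLeft_ι_mul, CliffordAlgebra.contractLeft_ι,
    ← Algebra.commutes, ← Algebra.smul_def, map_sub, map_smul, map_smul,
    CliffordAlgebra.contractLeft_ι, CliffordAlgebra.contractLeft_ι]
  rw [map_sub, map_mul, map_mul]
  simp [Algebra.smul_def, mul_comm]

open ExteriorAlgebra in
/-- Under the torsion-free conditions, the coefficient arrays `vⁱ_{ajk}` and
`vⁱ_{bjk}` are totally symmetric in all three indices. -/
theorem stmt_5 (n : ℕ) (V : Type*) [AddCommGroup V] [Module ℝ V]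
    (a b : Fin n → Module.Dual ℝ V)
    (hli : LinearIndependent ℝ (Sum.elim a b))
    (ua ub va vb : Fin n → Fin n → Fin n → ℝ)
    (u v : Fin n → Fin n → Module.Dual ℝ V)
    (hu : ∀ i j, u i j = ∑ k, ua i j k • a k + ∑ k, ub i j k • b k)
    (hv : ∀ i j, v i j = ∑ k, va i j k • a k + ∑ k, vb i j k • b k)
    (husym : ∀ i j, u i j = u j i) (hvsym : ∀ i j, v i j = v j i)
    (htf1 : ∀ i, (∑ j, ι ℝ (u i j) * ι ℝ (a j)) +
        (∑ j, ι ℝ (v i j) * ι ℝ (b j)) = 0)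
    (htf2 : ∀ i, (∑ j, ι ℝ (v i j) * ι ℝ (a j)) -
        (∑ j, ι ℝ (u i j) * ι ℝ (b j)) = 0) :
    ∀ i j k,
      (va i j k = va j k i ∧ va i j k = va k i j ∧ va i j k = va i k j ∧
        va i j k = va k j i ∧ va i j k = va j i k) ∧
      (vb i j k = vb j k i ∧ vb i j k = vb k i j ∧ vb i j k = vb i k j ∧
        vb i j k = vb k j i ∧ vb i j k = vb j i k) := by
  obtain ⟨e, he⟩ := exists_dualFamily' hli
  have ha1 : ∀ j k, a j (e (Sum.inl k)) = if j = k then 1 else 0 := fun j k => by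
    simpa using he (Sum.inl j) (Sum.inl k)
  have ha2 : ∀ j k, a j (e (Sum.inr k)) = 0 := fun j k => by
    simpa using he (Sum.inl j) (Sum.inr k)
  have hb1 : ∀ j k, b j (e (Sum.inl k)) = 0 := fun j k => by
    simpa using he (Sum.inr j) (Sum.inl k)
  have hb2 : ∀ j k, b j (e (Sum.inr k)) = if j = k then 1 else 0 := fun j k => by
    simpa using he (Sum.inr j) (Sum.inr k)
  have hvA : ∀ i j k, v i j (e (Sum.inl k)) = va i j k := by
    intro i j k
    rw [hv]
    simp [LinearMap.sum_apply, ha1, hb1, mul_ite]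
  have hvB : ∀ i j k, v i j (e (Sum.inr k)) = vb i j k := by
    intro i j k
    rw [hv]
    simp [LinearMap.sum_apply, ha2, hb2, mul_ite]
  -- symmetry in the first two indices
  have s12a : ∀ i j k, va i j k = va j i k := fun i j k => by
    rw [← hvA, ← hvA, hvsym]
  have s12b : ∀ i j k, vb i j k = vb j i k := fun i j k => by
    rw [← hvB, ← hvB, hvsym]
  -- symmetry in the last two indices, via double contraction
  have s23a : ∀ i p q, va i p q = va i q p := by
    intro i p q
    have h := congrArg (fun z =>
      CliffordAlgebra.contractLeft (Q := (0 : QuadraticForm ℝ (Module.Dual ℝ V)))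
        (Module.Dual.eval ℝ V (e (Sum.inl q)))
        (CliffordAlgebra.contractLeft (Q := 0)
          (Module.Dual.eval ℝ V (e (Sum.inl p))) z)) (htf2 i)
    simp only [map_sub, map_sum, map_zero, contract2', Module.Dual.eval_apply,
      ha1, hb1, hvA, mul_zero, zero_mul, sub_zero, zero_sub, mul_ite, ite_mul,
      mul_one, one_mul] at h
    rw [Finset.sum_sub_distrib, ← map_sum, ← map_sum, ← map_sub] at h
    simp only [Finset.sum_ite_eq', Finset.mem_univ, if_true, Finset.sum_const_zero,
      sub_zero, ExteriorAlgebra.algebraMap_eq_zero_iff, sub_eq_zero] at h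
    exact h.symm
  have s23b : ∀ i p q, vb i p q = vb i q p := by
    intro i p q
    have h := congrArg (fun z =>
      CliffordAlgebra.contractLeft (Q := (0 : QuadraticForm ℝ (Module.Dual ℝ V)))
        (Module.Dual.eval ℝ V (e (Sum.inr q)))
        (CliffordAlgebra.contractLeft (Q := 0)
          (Module.Dual.eval ℝ V (e (Sum.inr p))) z)) (htf1 i)
    simp only [map_add, map_sum, map_zero, contract2', Module.Dual.eval_apply,
      ha2, hb2, hvB, mul_zero, zero_mul, sub_zero, zero_sub, mul_ite, ite_mul,
      mul_one, one_mul] at h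
    rw [← map_sum] at h
    simp only [Finset.sum_const_zero, zero_add, ExteriorAlgebra.algebraMap_eq_zero_iff,
      Finset.sum_sub_distrib, Finset.sum_ite_eq', Finset.mem_univ, if_true, sub_eq_zero] at h
    exact h.symm
  intro i j k
  refine ⟨⟨?_, ?_, ?_, ?_, ?_⟩, ⟨?_, ?_, ?_, ?_, ?_⟩⟩
  · rw [s12a, s23a]
  · rw [s23a, s12a]
  · exact s23a i j k
  · rw [s23a, s12a, s23a]
  · exact s12a i j k
  · rw [s12b, s23b]
  · rw [s23b, s12b]
  · exact s23b i j k
  · rw [s23b, s12b, s23b]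
  · exact s12b i j k
end

section
/- Let a, b be linearly independent one-forms on a 2-dimensional real vector space. Then the equation 4·a∧b = 0 fails; consequently the system consisting of the 'W = 0' equation a∧bᵀ - b∧aᵀ + 2(a∧b)·Id₁ = 0 in one complex dimension with u = v = 0 has no solution. -/
set_option maxHeartbeats 1000000

open ExteriorAlgebra in
/-- For linearly independent one-forms `a`, `b` on a 2-dimensional real vector
space, `4·a∧b ≠ 0`; consequently the `W = 0` equation in one complex dimension
with `u = v = 0`, namely `a∧b - b∧a + 2(a∧b) = 0`, has no solution. -/
theorem stmt_14 (V : Type*) [AddCommGroup V] [Module ℝ V]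
    (hdim : Module.finrank ℝ V = 2)
    (a b : Module.Dual ℝ V) (hli : LinearIndependent ℝ ![a, b]) :
    (4 : ℝ) • (ι ℝ a * ι ℝ b) ≠ 0 ∧
      ι ℝ a * ι ℝ b - ι ℝ b * ι ℝ a + (2 : ℝ) • (ι ℝ a * ι ℝ b) ≠ 0 := by
  have hfd : FiniteDimensional ℝ V := by
    refine FiniteDimensional.of_finrank_pos ?_
    omega
  -- `![a, b]` is a basis of the dual space
  have hcard : Fintype.card (Fin 2) = Module.finrank ℝ (Module.Dual ℝ V) := by
    rw [Subspace.dual_finrank_eq, hdim]; rfl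
  let B : Module.Basis (Fin 2) ℝ (Module.Dual ℝ V) :=
    basisOfLinearIndependentOfCardEqFinrank hli hcard
  have hB : ∀ i, B i = ![a, b] i := fun i => by
    simp [B, coe_basisOfLinearIndependentOfCardEqFinrank]
  -- vectors in `V` dual to `a` and `b`
  let w : Fin 2 → V := fun j => (Module.evalEquiv ℝ V).symm (B.dualBasis j)
  have hentry : ∀ i j : Fin 2, (![a, b] i) (w j) = if j = i then 1 else 0 := by
    intro i j
    rw [← hB i]
    simp only [w, Module.apply_evalEquiv_symm_apply, Module.Basis.dualBasis_apply_self]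
    simp [eq_comm]
  -- the alternating evaluation map
  let g : Module.Dual ℝ V →ₗ[ℝ] (Fin 2 → ℝ) :=
    { toFun := fun p j => p (w j)
      map_add' := fun p q => by ext j; simp
      map_smul' := fun c p => by ext j; simp }
  let F : (Module.Dual ℝ V) [⋀^Fin 2]→ₗ[ℝ] ℝ := Matrix.detRowAlternating.compLinearMap g
  have hF : F ![a, b] = 1 := by
    show Matrix.det (Matrix.of fun i j => (![a, b] i) (w j)) = 1
    rw [Matrix.det_fin_two]
    simp [hentry]
  -- the family of alternating maps, nonzero only in degree 2
  let f : ∀ i : ℕ, (Module.Dual ℝ V) [⋀^Fin i]→ₗ[ℝ] ℝ := fun i =>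
    if h : i = 2 then h ▸ F else 0
  have key : ι ℝ a * ι ℝ b ≠ 0 := by
    intro h
    have h2 : ι ℝ a * ι ℝ b = ιMulti ℝ 2 ![a, b] := by
      simp [ιMulti_apply, List.ofFn_succ]
    have hz := congrArg (liftAlternating (R := ℝ) f) h
    rw [h2, liftAlternating_apply_ιMulti, map_zero] at hz
    have hf2 : f 2 = F := by simp [f]
    rw [hf2, hF] at hz
    exact one_ne_zero hz
  have key4 : ∀ c : ℝ, c ≠ 0 → c • (ι ℝ a * ι ℝ b) ≠ 0 := by
    intro c hc h
    apply key
    have : (c⁻¹ * c) • (ι ℝ a * ι ℝ b) = 0 := by rw [mul_smul, h, smul_zero]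
    rwa [inv_mul_cancel₀ hc, one_smul] at this
  have hswap : ι ℝ b * ι ℝ a = -(ι ℝ a * ι ℝ b) :=
    eq_neg_of_add_eq_zero_left (by rw [add_comm]; exact ι_add_mul_swap a b)
  refine ⟨key4 4 (by norm_num), fun h => key4 4 (by norm_num) ?_⟩
  rw [hswap, sub_neg_eq_add] at h
  rw [← h]
  module
end
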